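/- For any regular language L over A, if μ*(L) = 0 (where μ*_n(L) = |{s ∈ A^{<n} : s ∈ L}| / |A^{<n}| tends to 0 as n → ∞), then μ(L) = 0 (the sequence μ_n(L) tends to 0). -/

import Mathlib

open Filter

/-- `mu L n` is the probability that a uniformly random string of length `n` lies in `L`. -/
noncomputable def mu {A : Type*} [Fintype A] (L : Set (List A)) (n : ℕ) : ℝ :=
  (Nat.card {s : List A // s.length = n ∧ s ∈ L} : ℝ) / (Fintype.card A : ℝ) ^ n

/-- Symmetric difference of two languages. -/
def sdiffL {A : Type*} (L₁ L₂ : Set (List A)) : Set (List A) := (L₁ \ L₂) ∪ (L₂ \ L₁)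

/-- `L₁ ≃_p L₂` : the probability of the symmetric difference tends to `0`. -/
def pEquiv {A : Type*} [Fintype A] (L₁ L₂ : Set (List A)) : Prop :=
  Filter.Tendsto (mu (sdiffL L₁ L₂)) Filter.atTop (nhds 0)

/-- A language is regular if it is accepted by a DFA with finitely many states. -/
def IsRegularLang {A : Type*} (L : Set (List A)) : Prop :=
  ∃ (σ : Type) (_ : Fintype σ) (M : DFA A σ), L = {s : List A | M.eval s ∈ M.accept}

/-- `muStar L n` : the probability that a uniformly random string of length `< n` lies in `L`. -/
noncomputable def muStar {A : Type*} [Fintype A] (L : Set (List A)) (n : ℕ) : ℝ :=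
  (Nat.card {s : List A // s.length < n ∧ s ∈ L} : ℝ) /
    (∑ k ∈ Finset.range n, (Fintype.card A : ℝ) ^ k)

lemma mu_nonneg {A : Type*} [Fintype A] (L : Set (List A)) (n : ℕ) : 0 ≤ mu L n := by
  apply div_nonneg (by positivity) (by positivity)

lemma card_eq_le {A : Type*} [Fintype A] (L : Set (List A)) (n : ℕ) :
    (Nat.card {s : List A // s.length = n ∧ s ∈ L} : ℝ) ≤
      (Nat.card {s : List A // s.length < n + 1 ∧ s ∈ L} : ℝ) := by
  have h1 : Nat.card {s : List A // s.length = n ∧ s ∈ L}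
      = ({s : List A | s.length = n ∧ s ∈ L}).ncard := Nat.card_coe_set_eq _
  have h2 : Nat.card {s : List A // s.length < n + 1 ∧ s ∈ L}
      = ({s : List A | s.length < n + 1 ∧ s ∈ L}).ncard := Nat.card_coe_set_eq _
  rw [h1, h2]
  have hsub : {s : List A | s.length = n ∧ s ∈ L} ⊆ {s : List A | s.length < n + 1 ∧ s ∈ L} :=
    fun s hs => ⟨hs.1 ▸ n.lt_succ_self, hs.2⟩
  exact_mod_cast Set.ncard_le_ncard hsub
    ((List.finite_length_lt A (n+1)).subset (fun s hs => hs.1))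

lemma mu_le {A : Type*} [Fintype A] (L : Set (List A)) (hq : 2 ≤ Fintype.card A) (n : ℕ) :
    mu L n ≤ ((Fintype.card A : ℝ) / ((Fintype.card A : ℝ) - 1)) * muStar L (n + 1) := by
  set q : ℝ := (Fintype.card A : ℝ) with hqdef
  have hq' : (2 : ℝ) ≤ q := by rw [hqdef]; exact_mod_cast hq
  have hD : (0 : ℝ) < ∑ k ∈ Finset.range (n+1), q ^ k :=
    Finset.sum_pos (fun k _ => by positivity) ⟨0, Finset.mem_range.2 (Nat.succ_pos n)⟩
  have hgeom : (∑ k ∈ Finset.range (n+1), q ^ k) * (q - 1) = q ^ (n+1) - 1 := geom_sum_mul q (n+1)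
  have hNN := card_eq_le L n
  rw [mu, muStar, div_mul_div_comm]
  rw [div_le_div_iff₀ (by positivity) (by nlinarith)]
  have hqn : (0:ℝ) ≤ q ^ n := by positivity
  have hN : (0:ℝ) ≤ (Nat.card {s : List A // s.length = n ∧ s ∈ L} : ℝ) := Nat.cast_nonneg _
  nlinarith [pow_succ q n, mul_le_mul_of_nonneg_right hNN (mul_nonneg (by linarith : (0:ℝ) ≤ q) hqn)]

section One
variable {A : Type*} [Fintype A] [Nonempty A]

lemma list_eq_replicate (hA : Fintype.card A = 1) (a : A) (s : List A) :
    s = List.replicate s.length a := by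
  have : Subsingleton A := Fintype.card_le_one_iff_subsingleton.mp hA.le
  exact List.eq_replicate_length.mpr (fun b _ => Subsingleton.elim b a)

open Classical in
lemma card_count {σ : Type} (M : DFA A σ) (hA : Fintype.card A = 1) (a : A) (n : ℕ) :
    Nat.card {s : List A // s.length < n ∧ s ∈ {s : List A | M.eval s ∈ M.accept}}
      = ((Finset.range n).filter (fun m => M.eval (List.replicate m a) ∈ M.accept)).card := by
  have himg : {s : List A | s.length < n ∧ s ∈ {s : List A | M.eval s ∈ M.accept}}
      = (fun m => List.replicate m a) ''
        ↑((Finset.range n).filter (fun m => M.eval (List.replicate m a) ∈ M.accept)) := by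
    ext s
    constructor
    · rintro ⟨h1, h2⟩
      refine ⟨s.length, ?_, (list_eq_replicate hA a s).symm⟩
      simp only [Finset.coe_filter, Finset.mem_range, Set.mem_setOf_eq]
      exact ⟨h1, by rw [← list_eq_replicate hA a s]; exact h2⟩
    · rintro ⟨m, hm, rfl⟩
      simp only [Finset.coe_filter, Finset.mem_range, Set.mem_setOf_eq] at hm
      exact ⟨by simpa using hm.1, hm.2⟩
  have h0 : Nat.card {s : List A // s.length < n ∧ s ∈ {s : List A | M.eval s ∈ M.accept}}
      = ({s : List A | s.length < n ∧ s ∈ {s : List A | M.eval s ∈ M.accept}}).ncard :=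
    Nat.card_coe_set_eq _
  rw [h0, himg, Set.ncard_image_of_injective _ 
    (fun x y hxy => by simpa using congrArg List.length hxy), Set.ncard_coe_finset]

end One

open Classical in
lemma one_case {A : Type*} [Fintype A] [Nonempty A] {σ : Type} [Fintype σ] (M : DFA A σ)
    (hA : Fintype.card A = 1)
    (h : Tendsto (muStar {s : List A | M.eval s ∈ M.accept}) atTop (nhds 0)) :
    Tendsto (mu {s : List A | M.eval s ∈ M.accept}) atTop (nhds 0) := by
  set L : Set (List A) := {s : List A | M.eval s ∈ M.accept} with hLdef
  obtain ⟨a⟩ : Nonempty A := inferInstance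
  set f : ℕ → σ := fun n => M.eval (List.replicate n a) with hfdef
  have hstep : ∀ n, f (n + 1) = M.step (f n) a := by
    intro n
    simp only [hfdef, List.replicate_succ', DFA.eval_append_singleton]
  -- pigeonhole
  obtain ⟨x, y, hxy, hfeq⟩ := Fintype.exists_ne_map_eq_of_card_lt
    (fun k : Fin (Fintype.card σ + 1) => f k) (by simp)
  -- wlog i < j
  obtain ⟨i, j, hij, hfij⟩ : ∃ i j : ℕ, i < j ∧ f i = f j := by
    rcases lt_or_gt_of_ne (fun hc => hxy (Fin.ext hc) : (x:ℕ) ≠ y) with hc | hc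
    · exact ⟨x, y, hc, hfeq⟩
    · exact ⟨y, x, hc, hfeq.symm⟩
  set p := j - i with hpdef
  have hp : 0 < p := by omega
  have hper : ∀ m, f (i + m + p) = f (i + m) := by
    intro m
    induction m with
    | zero => rw [show i + 0 + p = j by omega, show i + 0 = i by omega]; exact hfij.symm
    | succ m ih =>
      rw [show i + (m+1) + p = (i + m + p) + 1 by omega, hstep, ih,
        show i + (m+1) = (i + m) + 1 by omega, hstep]
  have hge : ∀ n, i ≤ n → f (n + p) = f n := by
    intro n hn
    have := hper (n - i)
    rwa [show i + (n - i) = n by omega] at this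
  have hmul : ∀ m, i ≤ m → ∀ k, f (m + k * p) = f m := by
    intro m hm k
    induction k with
    | zero => simp
    | succ k ih =>
      rw [show m + (k+1) * p = (m + k * p) + p by ring, hge _ (by omega), ih]
  -- key : all states beyond i are rejecting
  have hnot : ∀ n, i ≤ n → f n ∉ M.accept := by
    by_contra hc
    push_neg at hc
    obtain ⟨m, hm, hacc⟩ := hc
    have hden : ∀ n : ℕ, (∑ k ∈ Finset.range n, (Fintype.card A : ℝ) ^ k) = n := by
      intro n; rw [hA]; simp
    -- lower bound on the count
    have hcount : ∀ K : ℕ, (K + 1 : ℕ) ≤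
        ((Finset.range (m + K * p + 1)).filter
          (fun q => M.eval (List.replicate q a) ∈ M.accept)).card := by
      intro K
      have := Finset.card_le_card_of_injOn (s := Finset.range (K + 1))
        (t := (Finset.range (m + K * p + 1)).filter
          (fun q => M.eval (List.replicate q a) ∈ M.accept))
        (fun k => m + k * p)
        (fun k hk => by
          have hk' : k < K + 1 := Finset.mem_range.mp hk
          refine Finset.mem_filter.mpr ⟨Finset.mem_range.mpr ?_, ?_⟩
          · show m + k * p < m + K * p + 1
            have := Nat.mul_le_mul_right p (by omega : k ≤ K); omega
          · show M.eval (List.replicate (m + k * p) a) ∈ M.accept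
            have : f (m + k * p) ∈ M.accept := by rw [hmul m hm k]; exact hacc
            exact this)
        (fun x _ y _ hxy => by
          have h' : x * p = y * p := by simp only at hxy; omega
          exact Nat.eq_of_mul_eq_mul_right hp h')
      simpa using this
    have hev : ∀ᶠ n in atTop, muStar L n < 1 / (2 * p) :=
      h.eventually_lt_const (by
        have : (0:ℝ) < (p:ℝ) := by exact_mod_cast hp
        positivity)
    obtain ⟨N, hN⟩ := eventually_atTop.mp hev
    set K := max m N with hK
    set n := m + K * p + 1 with hn
    have hnN : N ≤ n := by
      have : K ≤ K * p := Nat.le_mul_of_pos_right K hp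
      omega
    have hlt := hN n hnN
    have hmuStar : muStar L n = (((Finset.range n).filter
        (fun q => M.eval (List.replicate q a) ∈ M.accept)).card : ℝ) / n := by
      rw [muStar, hden, card_count M hA a]
    have hlow : (1 : ℝ) / (2 * p) ≤ muStar L n := by
      rw [hmuStar]
      have h1 : ((K + 1 : ℕ) : ℝ) ≤ (((Finset.range n).filter
          (fun q => M.eval (List.replicate q a) ∈ M.accept)).card : ℝ) := by
        exact_mod_cast hcount K
      have hnpos : (0:ℝ) < (n:ℝ) := by positivity
      have hppos : (0:ℝ) < (p:ℝ) := by exact_mod_cast hp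
      have h2 : (1 : ℝ) / (2 * p) ≤ ((K + 1 : ℕ) : ℝ) / n := by
        rw [div_le_div_iff₀ (by positivity) hnpos]
        have hKm : m ≤ K := le_max_left _ _
        have hcast : (n : ℝ) = (m:ℝ) + (K:ℝ) * (p:ℝ) + 1 := by rw [hn]; push_cast; ring
        have hp1 : (1:ℝ) ≤ (p:ℝ) := by exact_mod_cast hp
        have hKm' : (m:ℝ) ≤ (K:ℝ) := by exact_mod_cast hKm
        have hK0 : (0:ℝ) ≤ (K:ℝ) := Nat.cast_nonneg K
        rw [hcast]; push_cast; nlinarith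
      exact h2.trans ((div_le_div_iff_of_pos_right hnpos).mpr h1)
    linarith
  -- conclusion : mu L n = 0 for n ≥ i
  have hmu : ∀ n, i ≤ n → mu L n = 0 := by
    intro n hn
    have hset : {s : List A | s.length = n ∧ s ∈ L} = ∅ := by
      ext s
      simp only [Set.mem_setOf_eq, Set.mem_empty_iff_false, iff_false, not_and]
      rintro rfl hs
      refine hnot s.length hn ?_
      show M.eval (List.replicate s.length a) ∈ M.accept
      rw [← list_eq_replicate hA a s]
      exact hs
    have h0 : Nat.card {s : List A // s.length = n ∧ s ∈ L}
        = ({s : List A | s.length = n ∧ s ∈ L}).ncard := Nat.card_coe_set_eq _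
    rw [mu, h0, hset, Set.ncard_empty]
    simp
  refine tendsto_const_nhds.congr' ?_
  filter_upwards [eventually_ge_atTop i] with n hn
  exact (hmu n hn).symm

theorem mu_zero_of_muStar_zero {A : Type*} [Fintype A] [Nonempty A] (L : Set (List A))
    (hL : IsRegularLang L)
    (h : Filter.Tendsto (muStar L) Filter.atTop (nhds 0)) :
    Filter.Tendsto (mu L) Filter.atTop (nhds 0) := by
  rcases le_or_gt 2 (Fintype.card A) with hq | hq
  · have hb : ∀ n, mu L n ≤ ((Fintype.card A : ℝ) / ((Fintype.card A : ℝ) - 1)) * muStar L (n + 1) :=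
      mu_le L hq
    have h1 : Tendsto (fun n => ((Fintype.card A : ℝ) / ((Fintype.card A : ℝ) - 1)) *
        muStar L (n + 1)) atTop (nhds 0) := by
      have := ((h.comp (tendsto_add_atTop_nat 1)).const_mul
        ((Fintype.card A : ℝ) / ((Fintype.card A : ℝ) - 1)))
      simpa using this
    exact tendsto_of_tendsto_of_tendsto_of_le_of_le tendsto_const_nhds h1
      (fun n => mu_nonneg L n) hb
  · have hA : Fintype.card A = 1 := by
      have := Fintype.card_pos (α := A); omega
    obtain ⟨σ, hσ, M, rfl⟩ := hL
    letI := hσ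
    exact one_case M hA h
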